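/- Let τ₂₁ denote the flip operator on Mat_n(ℂ) ⊗ Mat_n(ℂ), realized on n²×n² Kronecker-product matrices by (τ₂₁ M)_{(i,j),(p,q)} = M_{(j,i),(q,p)}, so that τ₂₁(A ⊗ B) = B ⊗ A. Then for all v, x₁, x₂ ∈ ℂ such that θ̄(x₂−x₁) ≠ 0 and θ̄(v + (d/n)(kτ + l)) ≠ 0 and θ̄(−v + (d/n)(kτ + l)) ≠ 0 for every (k,l) ∈ {1,…,n}², the solution r is skew-symmetric: r(v; x₁, x₂) = −τ₂₁(r(−v; x₂, x₁)). -/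

import Mathlib

open Complex Matrix
open scoped Kronecker

noncomputable section

/-- `ε = exp(2πi d/n)`. -/
def eps (n d : ℕ) : ℂ := Complex.exp (2 * Real.pi * Complex.I * d / n)

/-- The diagonal matrix `X = diag(1, ε, ε², …, ε^{n−1})`. -/
def Xmat (n d : ℕ) : Matrix (Fin n) (Fin n) ℂ :=
  Matrix.diagonal fun i => eps n d ^ (i : ℕ)

/-- The cyclic shift matrix `Y` with `Y_{i,j} = 1` iff `j ≡ i+1 (mod n)`. -/
def Ymat (n : ℕ) : Matrix (Fin n) (Fin n) ℂ :=
  Matrix.of fun i j => if (j : ℕ) = ((i : ℕ) + 1) % n then 1 else 0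

/-- `Z_{(k,l)} = Y^k X^{−l}`. -/
def Zmat (n d : ℕ) (k l : ℕ) : Matrix (Fin n) (Fin n) ℂ :=
  Ymat n ^ k * (Xmat n d)⁻¹ ^ l

/-- `Z^∨_{(k,l)} = (1/n) X^l Y^{−k}`. -/
def Zdual (n d : ℕ) (k l : ℕ) : Matrix (Fin n) (Fin n) ℂ :=
  (n : ℂ)⁻¹ • (Xmat n d ^ l * (Ymat n)⁻¹ ^ k)

/-- The third Jacobi theta function `θ(z) = ∑_{m ∈ ℤ} exp(πiτm² + 2πimz)`. -/
def theta3 (τ z : ℂ) : ℂ :=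
  ∑' m : ℤ, Complex.exp (Real.pi * Complex.I * τ * (m : ℂ) ^ 2 +
    2 * Real.pi * Complex.I * (m : ℂ) * z)

/-- The first Jacobi theta function
`θ̄(z) = 2 exp(πiτ/4) ∑_{m ≥ 0} (−1)^m exp(πiτ m(m+1)) sin((2m+1)πz)`. -/
def theta1 (τ z : ℂ) : ℂ :=
  2 * Complex.exp (Real.pi * Complex.I * τ / 4) *
    ∑' m : ℕ, (-1 : ℂ) ^ m * Complex.exp (Real.pi * Complex.I * τ * (m : ℂ) * ((m : ℂ) + 1)) *
      Complex.sin ((2 * (m : ℂ) + 1) * Real.pi * z)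

/-- The Kronecker elliptic function `σ(u, z) = θ̄′(0) θ̄(u+z) / (θ̄(u) θ̄(z))`. -/
def sigmaK (τ u z : ℂ) : ℂ :=
  deriv (theta1 τ) 0 * theta1 τ (u + z) / (theta1 τ u * theta1 τ z)

/-- The elliptic solution `r(v; x₁, x₂)` of the AYBE, as an `n²×n²` matrix. -/
def rmat (n d : ℕ) (τ : ℂ) (v x₁ x₂ : ℂ) :
    Matrix (Fin n × Fin n) (Fin n × Fin n) ℂ :=
  ∑ p : Fin n × Fin n,
    (Complex.exp (2 * Real.pi * Complex.I * d * ((p.1.1 : ℂ) + 1) * (x₂ - x₁) / n) *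
      sigmaK τ (v + ((d : ℂ) / n) * (((p.1.1 : ℂ) + 1) * τ + ((p.2.1 : ℂ) + 1))) (x₂ - x₁)) •
      (Zdual n d (p.1.1 + 1) (p.2.1 + 1) ⊗ₖ Zmat n d (p.1.1 + 1) (p.2.1 + 1))

/-- The flip operator `τ₂₁` on `Mat_n(ℂ) ⊗ Mat_n(ℂ)`, with `τ₂₁(A ⊗ B) = B ⊗ A`. -/
def flipTensor (n : ℕ) (M : Matrix (Fin n × Fin n) (Fin n × Fin n) ℂ) :
    Matrix (Fin n × Fin n) (Fin n × Fin n) ℂ :=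
  Matrix.of fun a b => M (a.2, a.1) (b.2, b.1)

lemma sinExpand (x : ℂ) : Complex.sin x = (Complex.exp (-x * I) - Complex.exp (x * I)) * I / 2 := rfl

lemma theta1_eq {τ : ℂ} (hτ : 0 < τ.im) (z : ℂ) :
    theta1 τ z = -I * cexp (↑Real.pi * I * τ / 4) * cexp (↑Real.pi * I * z) *
      jacobiTheta₂ (z + (τ + 1) / 2) τ := by
  set π : ℝ := Real.pi with hπ
  set w : ℂ := z + (τ + 1) / 2 with hw
  have hsum : Summable (jacobiTheta₂_term · w τ) := (summable_jacobiTheta₂_term_iff w τ).mpr hτ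
  have key : ∀ m : ℕ, (-1 : ℂ) ^ m * cexp (↑π * I * τ * (m : ℂ) * ((m : ℂ) + 1)) *
      Complex.sin ((2 * (m : ℂ) + 1) * ↑π * z)
      = (jacobiTheta₂_term (m : ℤ) w τ + jacobiTheta₂_term (-((m : ℤ) + 1)) w τ) *
        (cexp (↑π * I * z) * (-I / 2)) := by
    intro m
    have h1 : (-1 : ℂ) ^ m = cexp ((m : ℂ) * (↑π * I)) := by
      rw [Complex.exp_nat_mul, Complex.exp_pi_mul_I]
    have h2 : (-1 : ℂ) ^ m = cexp ((m : ℂ) * (-(↑π * I))) := by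
      rw [Complex.exp_nat_mul, Complex.exp_neg, Complex.exp_pi_mul_I]
      norm_num
    have e2 : (-1 : ℂ) ^ m * cexp (↑π * I * τ * (m : ℂ) * ((m : ℂ) + 1)) *
        cexp (((2 * (m : ℂ) + 1) * ↑π * z) * I)
        = jacobiTheta₂_term (m : ℤ) w τ * cexp (↑π * I * z) := by
      rw [h1, jacobiTheta₂_term, ← Complex.exp_add, ← Complex.exp_add, ← Complex.exp_add]
      congr 1
      push_cast
      ring
    have e1 : (-1 : ℂ) ^ m * cexp (↑π * I * τ * (m : ℂ) * ((m : ℂ) + 1)) *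
        cexp (-((2 * (m : ℂ) + 1) * ↑π * z) * I)
        = -(jacobiTheta₂_term (-((m : ℤ) + 1)) w τ * cexp (↑π * I * z)) := by
      have hneg : -(jacobiTheta₂_term (-((m : ℤ) + 1)) w τ * cexp (↑π * I * z))
          = jacobiTheta₂_term (-((m : ℤ) + 1)) w τ * cexp (↑π * I * z) * cexp (↑π * I) := by
        rw [Complex.exp_pi_mul_I]; ring
      rw [h2, hneg, jacobiTheta₂_term, ← Complex.exp_add, ← Complex.exp_add, ← Complex.exp_add,
        ← Complex.exp_add]
      congr 1
      push_cast
      ring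
    rw [sinExpand]
    linear_combination (I / 2) * e1 - (I / 2) * e2
  rw [theta1, tsum_congr key, tsum_mul_right, tsum_nat_add_neg_add_one hsum]
  rw [show jacobiTheta₂ w τ = ∑' (n : ℤ), jacobiTheta₂_term n w τ from rfl]
  ring

lemma exp_neg_pi_mul_I : cexp (-(↑Real.pi * I)) = -1 := by
  rw [Complex.exp_neg, Complex.exp_pi_mul_I]; norm_num

lemma theta1_add_one {τ : ℂ} (hτ : 0 < τ.im) (z : ℂ) : theta1 τ (z + 1) = -theta1 τ z := by
  rw [theta1_eq hτ, theta1_eq hτ, show z + 1 + (τ + 1) / 2 = (z + (τ + 1) / 2) + 1 by ring,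
    jacobiTheta₂_add_left, show (↑Real.pi * I * (z + 1)) = ↑Real.pi * I * z + ↑Real.pi * I by ring,
    Complex.exp_add, Complex.exp_pi_mul_I]
  ring

lemma theta1_add_tau {τ : ℂ} (hτ : 0 < τ.im) (z : ℂ) :
    theta1 τ (z + τ) = -(cexp (-(↑Real.pi * I * τ) - 2 * ↑Real.pi * I * z) * theta1 τ z) := by
  rw [theta1_eq hτ, theta1_eq hτ, show z + τ + (τ + 1) / 2 = (z + (τ + 1) / 2) + τ by ring,
    jacobiTheta₂_add_left']
  set π : ℝ := Real.pi
  have h : cexp (↑π * I * (z + τ)) * cexp (-↑π * I * (τ + 2 * (z + (τ + 1) / 2)))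
      = -(cexp (-(↑π * I * τ) - 2 * ↑π * I * z) * cexp (↑π * I * z)) := by
    rw [← Complex.exp_add, ← Complex.exp_add,
      show ↑π * I * (z + τ) + -↑π * I * (τ + 2 * (z + (τ + 1) / 2))
        = (-(↑π * I * τ) - 2 * ↑π * I * z + ↑π * I * z) + -(↑π * I) by ring,
      Complex.exp_add, _root_.exp_neg_pi_mul_I]
    ring
  linear_combination (-I * cexp (↑π * I * τ / 4) * jacobiTheta₂ (z + (τ + 1) / 2) τ) * h

lemma theta1_add_nat {τ : ℂ} (hτ : 0 < τ.im) (z : ℂ) (b : ℕ) :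
    theta1 τ (z + b) = (-1) ^ b * theta1 τ z := by
  induction b with
  | zero => simp
  | succ b ih =>
    rw [show z + (↑(b + 1) : ℂ) = (z + b) + 1 by push_cast; ring, theta1_add_one hτ, ih]
    ring

lemma theta1_add_nat_tau {τ : ℂ} (hτ : 0 < τ.im) (z : ℂ) (a : ℕ) :
    theta1 τ (z + a * τ) = (-1) ^ a *
      cexp (-(↑Real.pi * I * τ * (a : ℂ) ^ 2) - 2 * ↑Real.pi * I * a * z) * theta1 τ z := by
  set π : ℝ := Real.pi
  induction a with
  | zero => simp
  | succ a ih =>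
    rw [show z + (↑(a + 1) : ℂ) * τ = (z + a * τ) + τ by push_cast; ring, theta1_add_tau hτ, ih]
    rw [show -(↑π * I * τ) - 2 * ↑π * I * (z + ↑a * τ)
        = (-(↑π * I * τ) - 2 * ↑π * I * z - 2 * ↑π * I * a * τ) by ring]
    rw [show (-(↑π * I * τ * (↑(a + 1) : ℂ) ^ 2) - 2 * ↑π * I * (↑(a + 1) : ℂ) * z)
        = (-(↑π * I * τ) - 2 * ↑π * I * z - 2 * ↑π * I * a * τ) +
          (-(↑π * I * τ * (a : ℂ) ^ 2) - 2 * ↑π * I * a * z) by push_cast; ring]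
    rw [Complex.exp_add]
    ring

lemma theta1_shift {τ : ℂ} (hτ : 0 < τ.im) (z : ℂ) (a b : ℕ) :
    theta1 τ (z + ((a : ℂ) * τ + b)) = (-1) ^ (a + b) *
      cexp (-(↑Real.pi * I * τ * (a : ℂ) ^ 2) - 2 * ↑Real.pi * I * a * z) * theta1 τ z := by
  rw [show z + ((a : ℂ) * τ + b) = (z + a * τ) + b by ring, theta1_add_nat hτ,
    theta1_add_nat_tau hτ, pow_add]
  ring

lemma theta1_neg (τ z : ℂ) : theta1 τ (-z) = -theta1 τ z := by
  have h : (∑' m : ℕ, (-1 : ℂ) ^ m * cexp (↑Real.pi * I * τ * (m : ℂ) * ((m : ℂ) + 1)) *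
      Complex.sin ((2 * (m : ℂ) + 1) * ↑Real.pi * (-z)))
      = -∑' m : ℕ, (-1 : ℂ) ^ m * cexp (↑Real.pi * I * τ * (m : ℂ) * ((m : ℂ) + 1)) *
        Complex.sin ((2 * (m : ℂ) + 1) * ↑Real.pi * z) := by
    rw [← tsum_neg]
    refine tsum_congr fun m => ?_
    rw [show (2 * (m : ℂ) + 1) * ↑Real.pi * (-z) = -((2 * (m : ℂ) + 1) * ↑Real.pi * z) by ring,
      Complex.sin_neg]
    ring
  rw [theta1, theta1, h]
  ring

lemma sigma_neg (τ u z : ℂ) : sigmaK τ (-u) (-z) = -sigmaK τ u z := by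
  rw [sigmaK, sigmaK, show -u + -z = -(u + z) by ring, theta1_neg, theta1_neg, theta1_neg,
    mul_neg, neg_mul_neg, neg_div]

lemma sigma_shift {τ : ℂ} (hτ : 0 < τ.im) (u z : ℂ) (a b : ℕ) :
    sigmaK τ (u + ((a : ℂ) * τ + b)) z = cexp (-(2 * ↑Real.pi * I * a * z)) * sigmaK τ u z := by
  set π : ℝ := Real.pi
  rw [sigmaK, sigmaK, show u + ((a : ℂ) * τ + b) + z = (u + z) + ((a : ℂ) * τ + b) by ring,
    theta1_shift hτ, theta1_shift hτ]
  set s : ℂ := (-1) ^ (a + b)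
  set E1 : ℂ := cexp (-(↑π * I * τ * (a : ℂ) ^ 2) - 2 * ↑π * I * a * (u + z))
  set E2 : ℂ := cexp (-(↑π * I * τ * (a : ℂ) ^ 2) - 2 * ↑π * I * a * u)
  have hs : s ≠ 0 := pow_ne_zero _ (by norm_num)
  have h1 : deriv (theta1 τ) 0 * (s * E1 * theta1 τ (u + z)) /
      (s * E2 * theta1 τ u * theta1 τ z)
      = (s * E1) / (s * E2) * (deriv (theta1 τ) 0 * theta1 τ (u + z) /
        (theta1 τ u * theta1 τ z)) := by
    rw [show deriv (theta1 τ) 0 * (s * E1 * theta1 τ (u + z))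
        = (s * E1) * (deriv (theta1 τ) 0 * theta1 τ (u + z)) by ring,
      show s * E2 * theta1 τ u * theta1 τ z = (s * E2) * (theta1 τ u * theta1 τ z) by ring,
      mul_div_mul_comm]
  rw [h1, mul_div_mul_left _ _ hs]
  have h2 : E1 / E2 = cexp (-(2 * ↑π * I * a * z)) := by
    rw [← Complex.exp_sub]
    congr 1
    ring
  rw [h2]

variable {n d : ℕ}

lemma eps_pow_n (hn : 0 < n) : eps n d ^ n = 1 := by
  have hn0 : (n : ℂ) ≠ 0 := Nat.cast_ne_zero.mpr hn.ne'
  rw [eps, ← Complex.exp_nat_mul,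
    show (n : ℂ) * (2 * ↑Real.pi * I * ↑d / ↑n) = (d : ℤ) * (2 * ↑Real.pi * I) by
      field_simp; norm_cast, Complex.exp_int_mul_two_pi_mul_I]

lemma eps_pow_mod (hn : 0 < n) (a : ℕ) : eps n d ^ a = eps n d ^ (a % n) := by
  conv_lhs => rw [← Nat.div_add_mod a n]
  rw [pow_add, pow_mul, eps_pow_n hn, one_pow, one_mul]

lemma eps_pow_congr (hn : 0 < n) {a b : ℕ} (h : a ≡ b [MOD n]) :
    eps n d ^ a = eps n d ^ b := by
  rw [eps_pow_mod hn a, eps_pow_mod hn b, h]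

lemma Ymat_pow_apply (hn : 0 < n) (k : ℕ) (i j : Fin n) :
    (Ymat n ^ k) i j = if (j : ℕ) = ((i : ℕ) + k) % n then 1 else 0 := by
  induction k generalizing j with
  | zero =>
    simp only [pow_zero, Matrix.one_apply, Nat.add_zero, Nat.mod_eq_of_lt i.isLt]
    by_cases hij : i = j
    · simp [hij]
    · rw [if_neg hij, if_neg (fun h => hij (Fin.ext (Eq.symm h)))]
  | succ k ih =>
    rw [pow_succ, Matrix.mul_apply]
    set t0 : Fin n := ⟨((i : ℕ) + k) % n, Nat.mod_lt _ hn⟩ with ht0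
    have hcond : ∀ t : Fin n, ((t : ℕ) = ((i : ℕ) + k) % n) ↔ (t = t0) := by
      intro t; rw [Fin.ext_iff]
    simp only [ih, hcond, ite_mul, one_mul, zero_mul]
    rw [Finset.sum_ite_eq' Finset.univ t0 (fun t => Ymat n t j)]
    simp only [Finset.mem_univ, if_true]
    rw [Ymat]
    simp only [Matrix.of_apply]
    have hval : (t0 : ℕ) = ((i : ℕ) + k) % n := rfl
    have hmod : ((i : ℕ) + k) % n + 1 ≡ (i : ℕ) + (k + 1) [MOD n] := by
      calc ((i : ℕ) + k) % n + 1 ≡ ((i : ℕ) + k) + 1 [MOD n] :=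
            Nat.ModEq.add_right 1 (Nat.mod_modEq _ n)
        _ = (i : ℕ) + (k + 1) := by ring
    simp only [hval, show (((i : ℕ) + k) % n + 1) % n = ((i : ℕ) + (k + 1)) % n from hmod]

lemma Xmat_pow (l : ℕ) : Xmat n d ^ l = Matrix.diagonal fun i : Fin n => eps n d ^ (l * (i : ℕ)) := by
  have h : (fun i : Fin n => eps n d ^ (i : ℕ)) ^ l
      = fun i : Fin n => eps n d ^ (l * (i : ℕ)) := by
    funext i
    rw [Pi.pow_apply, ← pow_mul, Nat.mul_comm]
  rw [Xmat, Matrix.diagonal_pow, h]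

lemma Xmat_pow_n (hn : 0 < n) : Xmat n d ^ n = 1 := by
  rw [Xmat_pow]
  have : (fun i : Fin n => eps n d ^ (n * (i : ℕ))) = fun _ => 1 := by
    funext i
    rw [pow_mul, eps_pow_n hn, one_pow]
  rw [this, Matrix.diagonal_one]

lemma Ymat_pow_n (hn : 0 < n) : Ymat n ^ n = 1 := by
  ext i j
  rw [Ymat_pow_apply hn, Matrix.one_apply]
  have : ((i : ℕ) + n) % n = (i : ℕ) := by
    rw [Nat.add_mod_right, Nat.mod_eq_of_lt i.isLt]
  rw [this]
  simp [Fin.ext_iff, eq_comm]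

lemma Xmat_inv (hn : 0 < n) : (Xmat n d)⁻¹ = Xmat n d ^ (n - 1) :=
  Matrix.inv_eq_right_inv (by
    rw [← pow_succ' (Xmat n d) (n - 1), Nat.sub_add_cancel hn, Xmat_pow_n hn])

lemma Ymat_inv (hn : 0 < n) : (Ymat n)⁻¹ = Ymat n ^ (n - 1) :=
  Matrix.inv_eq_right_inv (by
    rw [← pow_succ' (Ymat n) (n - 1), Nat.sub_add_cancel hn, Ymat_pow_n hn])

lemma Zmat_apply (hn : 0 < n) (k l : ℕ) (i j : Fin n) :
    Zmat n d k l i j = (if (j : ℕ) = ((i : ℕ) + k) % n then 1 else 0) *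
      eps n d ^ ((n - 1) * l * (j : ℕ)) := by
  rw [Zmat, Xmat_inv hn, ← pow_mul, Xmat_pow, Matrix.mul_diagonal, Ymat_pow_apply hn]

lemma Zdual_apply (hn : 0 < n) (k l : ℕ) (i j : Fin n) :
    Zdual n d k l i j = (n : ℂ)⁻¹ * (eps n d ^ (l * (i : ℕ)) *
      if (j : ℕ) = ((i : ℕ) + (n - 1) * k) % n then 1 else 0) := by
  rw [Zdual, Ymat_inv hn, ← pow_mul, Xmat_pow, Matrix.smul_apply, Matrix.diagonal_mul,
    Ymat_pow_apply hn, smul_eq_mul]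

lemma kron_swap (hn : 0 < n) (k l k' l' : ℕ)
    (hk : (k + k') % n = 0) (hl : (l + l') % n = 0) :
    Zdual n d k' l' ⊗ₖ Zmat n d k' l' = Zmat n d k l ⊗ₖ Zdual n d k l := by
  have hn1 : 1 ≤ n := hn
  have hzk : ((k : ZMod n) + (k' : ZMod n)) = 0 := by
    have := (ZMod.natCast_eq_natCast_iff (k + k') 0 n).mpr (by simpa [Nat.ModEq] using hk)
    push_cast at this
    simpa using this
  have hzl : ((l : ZMod n) + (l' : ZMod n)) = 0 := by
    have := (ZMod.natCast_eq_natCast_iff (l + l') 0 n).mpr (by simpa [Nat.ModEq] using hl)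
    push_cast at this
    simpa using this
  have hnm : ((n - 1 : ℕ) : ZMod n) = -1 := by
    rw [Nat.cast_sub hn1, ZMod.natCast_self]
    ring
  ext ⟨i₁, i₂⟩ ⟨j₁, j₂⟩
  rw [Matrix.kroneckerMap_apply, Matrix.kroneckerMap_apply, Zdual_apply hn, Zdual_apply hn,
    Zmat_apply hn, Zmat_apply hn]
  have hmod1 : ((i₁ : ℕ) + (n - 1) * k') % n = ((i₁ : ℕ) + k) % n := by
    have : ((i₁ : ℕ) + (n - 1) * k') ≡ ((i₁ : ℕ) + k) [MOD n] := by
      rw [← ZMod.natCast_eq_natCast_iff]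
      push_cast [hnm]
      linear_combination -hzk
    exact this
  have hmod2 : ((i₂ : ℕ) + (n - 1) * k) % n = ((i₂ : ℕ) + k') % n := by
    have : ((i₂ : ℕ) + (n - 1) * k) ≡ ((i₂ : ℕ) + k') [MOD n] := by
      rw [← ZMod.natCast_eq_natCast_iff]
      push_cast [hnm]
      linear_combination -hzk
    exact this
  rw [hmod1, hmod2]
  by_cases h1 : (j₁ : ℕ) = ((i₁ : ℕ) + k) % n
  · by_cases h2 : (j₂ : ℕ) = ((i₂ : ℕ) + k') % n
    · simp only [if_pos h1, if_pos h2, mul_one, one_mul]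
      have hexp : eps n d ^ (l' * (i₁ : ℕ)) * eps n d ^ ((n - 1) * l' * (j₂ : ℕ))
          = eps n d ^ ((n - 1) * l * (j₁ : ℕ)) * eps n d ^ (l * (i₂ : ℕ)) := by
        rw [← pow_add, ← pow_add]
        apply eps_pow_congr hn
        rw [← ZMod.natCast_eq_natCast_iff]
        have e1 : ((j₁ : ℕ) : ZMod n) = ((i₁ : ℕ) : ZMod n) + (k : ZMod n) := by
          rw [h1, ZMod.natCast_mod]
          push_cast
          ring
        have e2 : ((j₂ : ℕ) : ZMod n) = ((i₂ : ℕ) : ZMod n) + (k' : ZMod n) := by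
          rw [h2, ZMod.natCast_mod]
          push_cast
          ring
        push_cast [hnm]
        rw [e1, e2]
        linear_combination ((i₁ : ZMod n) - (i₂ : ZMod n)) * hzl + (l : ZMod n) * hzk
          - (k' : ZMod n) * hzl
      linear_combination ((n : ℂ))⁻¹ * hexp
    · simp [h1, h2]
  · simp [h1]

def psiFun (n : ℕ) : Fin n → Fin n :=
  fun i => ⟨n - 1 - ((i.val + 1) % n), by have := i.isLt; omega⟩

lemma psiFun_val (i : Fin n) : (psiFun n i).val = n - 1 - ((i.val + 1) % n) := rfl

lemma psiFun_invol : Function.Involutive (psiFun n) := by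
  intro i
  have hin := i.isLt
  apply Fin.ext
  rw [psiFun_val, psiFun_val]
  by_cases hc : i.val + 1 = n
  · have e1 : (i.val + 1) % n = 0 := by rw [hc, Nat.mod_self]
    rw [e1]
    have e2 : (n - 1 - 0 + 1) % n = 0 := by
      rw [show n - 1 - 0 + 1 = n by omega, Nat.mod_self]
    rw [e2]
    omega
  · have e1 : (i.val + 1) % n = i.val + 1 := Nat.mod_eq_of_lt (by omega)
    rw [e1]
    have e2 : (n - 1 - (i.val + 1) + 1) % n = n - 1 - (i.val + 1) + 1 :=
      Nat.mod_eq_of_lt (by omega)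
    rw [e2]
    omega

lemma psiFun_add (i : Fin n) :
    ∃ a : ℕ, (i.val + 1) + ((psiFun n i).val + 1) = n * a := by
  have hin := i.isLt
  rw [psiFun_val]
  by_cases hc : i.val + 1 = n
  · exact ⟨2, by rw [show (i.val + 1) % n = 0 by rw [hc, Nat.mod_self]]; omega⟩
  · exact ⟨1, by rw [Nat.mod_eq_of_lt (show i.val + 1 < n by omega)]; omega⟩

lemma flipTensor_sum {ι : Type*} (s : Finset ι) (f : ι → Matrix (Fin n × Fin n) (Fin n × Fin n) ℂ) :
    flipTensor n (∑ i ∈ s, f i) = ∑ i ∈ s, flipTensor n (f i) := by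
  ext a b
  simp only [flipTensor, Matrix.of_apply, Matrix.sum_apply]

lemma flipTensor_smul (c : ℂ) (M : Matrix (Fin n × Fin n) (Fin n × Fin n) ℂ) :
    flipTensor n (c • M) = c • flipTensor n M := by
  ext a b
  simp [flipTensor]

lemma flipTensor_kron (A B : Matrix (Fin n) (Fin n) ℂ) :
    flipTensor n (A ⊗ₖ B) = B ⊗ₖ A := by
  ext ⟨i, j⟩ ⟨p, q⟩
  simp [flipTensor, Matrix.kroneckerMap_apply, mul_comm]

lemma coeff_eq {τ : ℂ} (hτ : 0 < τ.im) (hn : 0 < n) (k l k' l' a b : ℕ)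
    (hk : k + k' = n * a) (hl : l + l' = n * b) (v z : ℂ) :
    cexp (2 * ↑Real.pi * I * d * (k' : ℂ) * z / n) *
      sigmaK τ (v + ((d : ℂ) / n) * ((k' : ℂ) * τ + (l' : ℂ))) z
    = -(cexp (2 * ↑Real.pi * I * d * (k : ℂ) * (-z) / n) *
        sigmaK τ (-v + ((d : ℂ) / n) * ((k : ℂ) * τ + (l : ℂ))) (-z)) := by
  have hn0 : (n : ℂ) ≠ 0 := Nat.cast_ne_zero.mpr hn.ne'
  have hk' : (k : ℂ) + (k' : ℂ) = (n : ℂ) * a := by exact_mod_cast congrArg (Nat.cast (R := ℂ)) hk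
  have hl' : (l : ℂ) + (l' : ℂ) = (n : ℂ) * b := by exact_mod_cast congrArg (Nat.cast (R := ℂ)) hl
  set u : ℂ := v - ((d : ℂ) / n) * ((k : ℂ) * τ + l) with hu
  have h1 : -v + ((d : ℂ) / n) * ((k : ℂ) * τ + (l : ℂ)) = -u := by rw [hu]; ring
  have h2 : v + ((d : ℂ) / n) * ((k' : ℂ) * τ + (l' : ℂ))
      = u + (((d * a : ℕ) : ℂ) * τ + ((d * b : ℕ) : ℂ)) := by
    rw [hu]
    push_cast
    field_simp
    linear_combination ((d : ℂ) * τ) * hk' + (d : ℂ) * hl'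
  rw [h1, sigma_neg, h2, sigma_shift hτ]
  have h3 : cexp (2 * ↑Real.pi * I * d * (k' : ℂ) * z / n) *
      cexp (-(2 * ↑Real.pi * I * ((d * a : ℕ) : ℂ) * z))
      = cexp (2 * ↑Real.pi * I * d * (k : ℂ) * (-z) / n) := by
    rw [← Complex.exp_add]
    congr 1
    push_cast
    field_simp
    linear_combination ((d : ℂ) * z) * hk'
  linear_combination sigmaK τ u z * h3

/-- The elliptic solution of AYBE is skew-symmetric: `r(v; x₁, x₂) = −τ₂₁(r(−v; x₂, x₁))`. -/
theorem stmt14 (n d : ℕ) (hd : 0 < d) (hdn : d < n) (hcop : Nat.gcd d n = 1)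
    (τ : ℂ) (hτ : 0 < τ.im) (v x₁ x₂ : ℂ)
    (hx : theta1 τ (x₂ - x₁) ≠ 0)
    (hpol : ∀ k l : ℕ, 1 ≤ k → k ≤ n → 1 ≤ l → l ≤ n →
      theta1 τ (v + ((d : ℂ) / n) * (k * τ + l)) ≠ 0 ∧
      theta1 τ (-v + ((d : ℂ) / n) * (k * τ + l)) ≠ 0) :
    rmat n d τ v x₁ x₂ = -flipTensor n (rmat n d τ (-v) x₂ x₁) := by
  have hn : 0 < n := lt_trans hd hdn
  have hn0 : (n : ℂ) ≠ 0 := Nat.cast_ne_zero.mpr hn.ne'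
  set z : ℂ := x₂ - x₁ with hz
  have hswap : x₁ - x₂ = -z := by rw [hz]; ring
  rw [rmat, rmat, flipTensor_sum]
  rw [← Finset.sum_neg_distrib]
  refine Fintype.sum_equiv
    (Equiv.prodCongr (psiFun_invol.toPerm) (psiFun_invol.toPerm)) _ _ fun p => ?_
  obtain ⟨i, j⟩ := p
  simp only [Equiv.prodCongr_apply, Function.Involutive.coe_toPerm, Prod.map]
  obtain ⟨a, ha⟩ := psiFun_add (n := n) i
  obtain ⟨b, hb⟩ := psiFun_add (n := n) j
  set k : ℕ := i.val + 1
  set l : ℕ := j.val + 1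
  set k' : ℕ := (psiFun n i).val + 1
  set l' : ℕ := (psiFun n j).val + 1
  have hkron : Zdual n d k l ⊗ₖ Zmat n d k l = Zmat n d k' l' ⊗ₖ Zdual n d k' l' :=
    kron_swap hn k' l' k l (by rw [Nat.add_comm, ha, Nat.mul_mod_right])
      (by rw [Nat.add_comm, hb, Nat.mul_mod_right])
  have hc := coeff_eq (d := d) hτ hn k' l' k l a b
    (by rw [Nat.add_comm]; exact ha) (by rw [Nat.add_comm]; exact hb) v z
  push_cast [k, l, k', l'] at hc
  rw [flipTensor_smul, flipTensor_kron, hswap, ← neg_smul]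
  rw [hkron, ← hz, hc]
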